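/- Let P be a slicing of a triangulated category D. Then the Harder–Narasimhan filtration of any nonzero object X of D is unique up to unique isomorphism: if F_{•}X (with factors A_n, …, A_0 of phases φ_n > ⋯ > φ_0) and G_{•}X (with factors B_m, …, B_0 of phases ψ_m > ⋯ > ψ_0) are two Harder–Narasimhan filtrations of X, then n = m, φ_j = ψ_j for all j, and there exist unique isomorphisms f_j : F_jX → G_jX and g_j : A_j → B_j with f_0 = id_X such that for every j the pair (f_{j+1}, f_j, g_j) is an isomorphism of the distinguished triangles F_{j+1}X → F_jX → A_j →⁺ and G_{j+1}X → G_jX → B_j →⁺. -/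

import Mathlib

open CategoryTheory CategoryTheory.Limits CategoryTheory.Pretriangulated

universe v u

variable (D : Type u) [Category.{v} D] [HasZeroObject D] [HasShift D ℤ] [Preadditive D]
  [∀ n : ℤ, (shiftFunctor D n).Additive] [Pretriangulated D]

/-- A slicing `P` of a triangulated category `D`: for every real number `φ`, a full additive
subcategory `P φ` (given by a predicate on objects), closed under isomorphisms, such that
(i) `P (φ + 1) = P φ ⟦1⟧` and (ii) `Hom(A₁, A₂) = 0` whenever `A₁ ∈ P φ₁`, `A₂ ∈ P φ₂` and
`φ₁ > φ₂`. -/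
structure Slicing where
  /-- the objects of the slice with phase `φ` -/
  P : ℝ → D → Prop
  mem_of_iso : ∀ {φ : ℝ} {X Y : D}, (X ≅ Y) → P φ X → P φ Y
  zero_mem : ∀ (φ : ℝ) (X : D), IsZero X → P φ X
  sum_mem : ∀ (φ : ℝ) (X Y : D), P φ X → P φ Y → P φ (X ⊞ Y)
  shift_mem : ∀ (φ : ℝ) (X : D), P φ X → P (φ + 1) (X⟦(1 : ℤ)⟧)
  shift_mem' : ∀ (φ : ℝ) (X : D), P (φ + 1) (X⟦(1 : ℤ)⟧) → P φ X
  hom_zero : ∀ {φ₁ φ₂ : ℝ}, φ₂ < φ₁ → ∀ {A₁ A₂ : D}, P φ₁ A₁ → P φ₂ A₂ →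
    ∀ f : A₁ ⟶ A₂, f = 0

variable {D}

/-- A Harder–Narasimhan filtration of a (necessarily nonzero) object `X` with respect to a
slicing `S`: a finite collection of distinguished triangles
`F (j+1) → F j → A j →⁺ (F (j+1))⟦1⟧` for `0 ≤ j ≤ n`, with `F 0 = X`, `F (n+1) = 0`, where
each `A j` is a nonzero object of `S.P (phase j)` and
`phase n > phase (n-1) > ⋯ > phase 0`.
(The semistable HN-factors are `A n, …, A 0`; `φ₊(X) = phase n` and `φ₋(X) = phase 0`.) -/
structure HNFiltration (S : Slicing D) (X : D) where
  /-- the number of steps: there are `n + 1` HN-factors `A 0, …, A n` -/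
  n : ℕ
  /-- the filtration objects -/
  F : ℕ → D
  /-- the semistable factors -/
  A : ℕ → D
  /-- the phases of the factors -/
  phase : ℕ → ℝ
  f : ∀ j : ℕ, F (j + 1) ⟶ F j
  g : ∀ j : ℕ, F j ⟶ A j
  h : ∀ j : ℕ, A j ⟶ (F (j + 1))⟦(1 : ℤ)⟧
  F_zero : F 0 = X
  isZero_top : IsZero (F (n + 1))
  mem : ∀ j ≤ n, S.P (phase j) (A j)
  nonzero : ∀ j ≤ n, ¬ IsZero (A j)
  dist : ∀ j ≤ n, (Triangle.mk (f j) (g j) (h j) ∈ distTriang D)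
  phase_lt : ∀ j : ℕ, j + 1 ≤ n → phase j < phase (j + 1)

section Aux

variable {S : Slicing D} {X : D}

lemma phase_lt_of_lt (H : HNFiltration S X) {i j : ℕ} (hij : i < j) (hj : j ≤ H.n) :
    H.phase i < H.phase j := by
  induction j with
  | zero => omega
  | succ j ih =>
    have h1 : H.phase j < H.phase (j + 1) := H.phase_lt j hj
    rcases Nat.lt_succ_iff_lt_or_eq.mp hij with h | h
    · exact lt_trans (ih h (by omega)) h1
    · subst h; exact h1

lemma phase_le_of_le (H : HNFiltration S X) {i j : ℕ} (hij : i ≤ j) (hj : j ≤ H.n) :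
    H.phase i ≤ H.phase j := by
  rcases Nat.eq_or_lt_of_le hij with h | h
  · rw [h]
  · exact (phase_lt_of_lt H h hj).le

lemma homZeroAux (H : HNFiltration S X) (C : D) :
    ∀ (d k : ℕ), k + d = H.n + 1 →
      (∀ i, k ≤ i → i ≤ H.n → ∀ v : H.A i ⟶ C, v = 0) →
      ∀ u : H.F k ⟶ C, u = 0 := by
  intro d
  induction d with
  | zero =>
    intro k hk _ u
    have hz : IsZero (H.F k) := by rw [show k = H.n + 1 by omega]; exact H.isZero_top
    exact hz.eq_of_src u 0
  | succ d ih =>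
    intro k hk hC u
    have hk' : k ≤ H.n := by omega
    have h1 : H.f k ≫ u = 0 :=
      ih (k + 1) (by omega) (fun i hi hi' v => hC i (by omega) hi' v) _
    obtain ⟨v, hv⟩ := Triangle.yoneda_exact₂ _ (H.dist k hk') u h1
    rw [hv, hC k le_rfl hk' v]; exact comp_zero

lemma homZeroF (H : HNFiltration S X) (C : D) (k : ℕ) (hk : k ≤ H.n + 1)
    (hC : ∀ i, k ≤ i → i ≤ H.n → ∀ v : H.A i ⟶ C, v = 0)
    (u : H.F k ⟶ C) : u = 0 :=
  homZeroAux H C (H.n + 1 - k) k (by omega) hC u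

lemma homZeroShift (H : HNFiltration S X) (C : D) (k : ℕ) (hk : k ≤ H.n + 1)
    (hC : ∀ i, k ≤ i → i ≤ H.n → ∀ v : (H.A i)⟦(1 : ℤ)⟧ ⟶ C, v = 0)
    (u : (H.F k)⟦(1 : ℤ)⟧ ⟶ C) : u = 0 := by
  have e := shiftFunctorCompIsoId D (1 : ℤ) (-1 : ℤ) (by omega)
  have e2 := shiftFunctorCompIsoId D (-1 : ℤ) (1 : ℤ) (by omega)
  have hu' : e.inv.app (H.F k) ≫ u⟦(-1 : ℤ)⟧' = 0 := by
    refine homZeroF H _ k hk (fun i hi hi' v => ?_) _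
    have hz : v⟦(1 : ℤ)⟧' ≫ e2.hom.app C = 0 := hC i hi hi' _
    have hz2 : v⟦(1 : ℤ)⟧' = 0 := by
      rw [← cancel_mono (e2.hom.app C), zero_comp]; exact hz
    exact (shiftFunctor D (1 : ℤ)).map_injective (by rw [hz2, Functor.map_zero])
  have hu2 : u⟦(-1 : ℤ)⟧' = 0 := by
    rw [← cancel_epi (e.inv.app (H.F k)), comp_zero]; exact hu'
  exact (shiftFunctor D (-1 : ℤ)).map_injective (by rw [hu2, Functor.map_zero])

lemma mem_shift_neg {θ : ℝ} {C : D} (hC : S.P θ C) :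
    S.P (θ - 1) (C⟦(-1 : ℤ)⟧) := by
  apply S.shift_mem'
  have h2 : S.P ((θ - 1) + 1) (C⟦(-1 : ℤ)⟧⟦(1 : ℤ)⟧) := by
    rw [show θ - 1 + 1 = θ by ring]
    exact S.mem_of_iso
      ((shiftFunctorCompIsoId D (-1 : ℤ) (1 : ℤ) (by omega)).symm.app C) hC
  exact h2

lemma g_ne_zero (H : HNFiltration S X) (j : ℕ) (hj : j ≤ H.n) : H.g j ≠ 0 := by
  intro h0
  have hT := H.dist j hj
  obtain ⟨w, hw⟩ := Triangle.yoneda_exact₂ _ (rot_of_distTriang _ hT) (𝟙 (H.A j))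
    (by simp [h0]; exact zero_comp)
  have hw0 : w = 0 := by
    refine homZeroShift H (H.A j) (j + 1) (by omega) (fun i hi hi' v => ?_) w
    refine S.hom_zero ?_ (S.shift_mem _ _ (H.mem i hi')) (H.mem j hj) v
    have := phase_lt_of_lt H (show j < i by omega) hi'
    linarith
  have hid : 𝟙 (H.A j) = 0 := by
    rw [hw, hw0]; exact comp_zero
  exact H.nonzero j hj ((IsZero.iff_id_eq_zero _).mpr hid)

lemma factor_unique (H G : HNFiltration S X) (j : ℕ) (hjG : j ≤ G.n)
    (hk : j + 1 ≤ H.n + 1)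
    (hph : ∀ i, j + 1 ≤ i → i ≤ H.n → G.phase j - 1 < H.phase i)
    {u v : H.F (j + 1) ⟶ G.F (j + 1)} (huv : u ≫ G.f j = v ≫ G.f j) : u = v := by
  have hT := inv_rot_of_distTriang _ (G.dist j hjG)
  obtain ⟨w, hw⟩ := Triangle.coyoneda_exact₂ _ hT (u - v)
    (by simp only [Triangle.invRotate_mor₂, Triangle.mk_mor₁, Triangle.invRotate_obj₂,
        Triangle.mk_obj₁]; exact (Preadditive.sub_comp u v (G.f j)).trans (sub_eq_zero.mpr huv))
  have hw0 : w = 0 := by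
    refine homZeroF H _ (j + 1) hk (fun i hi hi' x => ?_) w
    exact S.hom_zero (hph i hi hi') (H.mem i hi') (mem_shift_neg (G.mem j hjG)) x
  have : u - v = 0 := by rw [hw, hw0]; exact zero_comp
  exact sub_eq_zero.mp this

lemma g_unique (H G : HNFiltration S X) (j : ℕ) (hj : j ≤ H.n) (hjG : j ≤ G.n)
    (hph : ∀ i, j + 1 ≤ i → i ≤ H.n → G.phase j < H.phase i + 1)
    {u v : H.A j ⟶ G.A j} (huv : H.g j ≫ u = H.g j ≫ v) : u = v := by
  obtain ⟨w, hw⟩ := Triangle.yoneda_exact₂ _ (rot_of_distTriang _ (H.dist j hj)) (u - v)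
    (by simp only [Triangle.rotate_mor₁, Triangle.mk_mor₂, Triangle.rotate_obj₂,
        Triangle.mk_obj₃]; exact (Preadditive.comp_sub (H.g j) u v).trans (sub_eq_zero.mpr huv))
  have hw0 : w = 0 := by
    refine homZeroShift H _ (j + 1) (by omega) (fun i hi hi' x => ?_) w
    exact S.hom_zero (hph i hi hi') (S.shift_mem _ _ (H.mem i hi')) (G.mem j hjG) x
  have : u - v = 0 := by rw [hw, hw0]; exact comp_zero
  exact sub_eq_zero.mp this

open Classical in
noncomputable def fseq (H G : HNFiltration S X) : ∀ j : ℕ, H.F j ⟶ G.F j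
  | 0 => eqToHom (H.F_zero.trans G.F_zero.symm)
  | (j + 1) =>
    if h : j ≤ G.n ∧ (H.f j ≫ fseq H G j) ≫ G.g j = 0 then
      (Triangle.coyoneda_exact₂ _ (G.dist j h.1) (H.f j ≫ fseq H G j) h.2).choose
    else 0

lemma fseq_spec (H G : HNFiltration S X) (j : ℕ) (h1 : j ≤ G.n)
    (h2 : (H.f j ≫ fseq H G j) ≫ G.g j = 0) :
    H.f j ≫ fseq H G j = fseq H G (j + 1) ≫ G.f j := by
  rw [fseq]; erw [dif_pos ⟨h1, h2⟩]
  exact (Triangle.coyoneda_exact₂ _ (G.dist j h1) (H.f j ≫ fseq H G j) h2).choose_spec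

open Classical in
noncomputable def gseq (H G : HNFiltration S X) (j : ℕ) : H.A j ⟶ G.A j :=
  if h : j ≤ H.n ∧ j ≤ G.n ∧ H.f j ≫ fseq H G j = fseq H G (j + 1) ≫ G.f j then
    (complete_distinguished_triangle_morphism _ _ (H.dist j h.1) (G.dist j h.2.1)
      (fseq H G (j + 1)) (fseq H G j) h.2.2).choose
  else 0

lemma gseq_spec (H G : HNFiltration S X) (j : ℕ) (h1 : j ≤ H.n) (h2 : j ≤ G.n)
    (h3 : H.f j ≫ fseq H G j = fseq H G (j + 1) ≫ G.f j) :
    H.g j ≫ gseq H G j = fseq H G j ≫ G.g j ∧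
    H.h j ≫ (fseq H G (j + 1))⟦(1 : ℤ)⟧' = gseq H G j ≫ G.h j := by
  rw [gseq]; erw [dif_pos ⟨h1, h2, h3⟩]
  exact (complete_distinguished_triangle_morphism _ _ (H.dist j h1) (G.dist j h2)
    (fseq H G (j + 1)) (fseq H G j) h3).choose_spec

lemma core (H G : HNFiltration S X) (j : ℕ) (hj : j ≤ H.n) (hj' : j ≤ G.n + 1)
    (c1 : fseq H G j ≫ fseq G H j = 𝟙 (H.F j))
    (c2 : fseq G H j ≫ fseq H G j = 𝟙 (G.F j)) :
    j ≤ G.n ∧ H.phase j = G.phase j ∧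
      H.f j ≫ fseq H G j = fseq H G (j + 1) ≫ G.f j := by
  have hGn : j ≤ G.n := by
    by_contra hc
    have hz : IsZero (G.F j) := by rw [show j = G.n + 1 by omega]; exact G.isZero_top
    have h0 : H.g j = 0 := by
      have : fseq G H j ≫ H.g j = 0 := hz.eq_of_src _ _
      calc H.g j = (fseq H G j ≫ fseq G H j) ≫ H.g j := by rw [c1, Category.id_comp]
        _ = fseq H G j ≫ (fseq G H j ≫ H.g j) := by rw [Category.assoc]
        _ = 0 := by rw [this, comp_zero]
    exact g_ne_zero H j hj h0
  have hph : H.phase j = G.phase j := by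
    have h1 : ¬ (H.phase j < G.phase j) := by
      intro hlt
      have hu : fseq G H j ≫ H.g j = 0 := by
        refine homZeroF G (H.A j) j (by omega) (fun i hi hi' v => ?_) _
        refine S.hom_zero ?_ (G.mem i hi') (H.mem j hj) v
        have := phase_le_of_le G hi hi'
        linarith
      have h0 : H.g j = 0 := by
        calc H.g j = (fseq H G j ≫ fseq G H j) ≫ H.g j := by rw [c1, Category.id_comp]
          _ = fseq H G j ≫ (fseq G H j ≫ H.g j) := by rw [Category.assoc]
          _ = 0 := by rw [hu, comp_zero]
      exact g_ne_zero H j hj h0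
    have h2 : ¬ (G.phase j < H.phase j) := by
      intro hlt
      have hu : fseq H G j ≫ G.g j = 0 := by
        refine homZeroF H (G.A j) j (by omega) (fun i hi hi' v => ?_) _
        refine S.hom_zero ?_ (H.mem i hi') (G.mem j hGn) v
        have := phase_le_of_le H hi hi'
        linarith
      have h0 : G.g j = 0 := by
        calc G.g j = (fseq G H j ≫ fseq H G j) ≫ G.g j := by rw [c2, Category.id_comp]
          _ = fseq G H j ≫ (fseq H G j ≫ G.g j) := by rw [Category.assoc]
          _ = 0 := by rw [hu, comp_zero]
      exact g_ne_zero G j hGn h0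
    linarith [lt_trichotomy (H.phase j) (G.phase j), not_lt.mp h1, not_lt.mp h2]
  refine ⟨hGn, hph, fseq_spec H G j hGn ?_⟩
  refine homZeroF H (G.A j) (j + 1) (by omega) (fun i hi hi' x => ?_) _
  refine S.hom_zero ?_ (H.mem i hi') (G.mem j hGn) x
  have := phase_lt_of_lt H (show j < i by omega) hi'
  linarith

lemma main_inv (H G : HNFiltration S X) : ∀ j : ℕ,
    (j ≤ H.n + 1 → j ≤ G.n + 1) ∧ (j ≤ G.n + 1 → j ≤ H.n + 1) ∧
    (j ≤ H.n + 1 → j ≤ G.n + 1 →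
      fseq H G j ≫ fseq G H j = 𝟙 (H.F j) ∧ fseq G H j ≫ fseq H G j = 𝟙 (G.F j)) := by
  intro j
  induction j with
  | zero =>
    refine ⟨fun _ => by omega, fun _ => by omega, fun _ _ => ⟨?_, ?_⟩⟩ <;>
      simp [fseq]
  | succ j ih =>
    obtain ⟨ih1, ih2, ih3⟩ := ih
    have key : ∀ (hjH : j ≤ H.n) (hjG : j ≤ G.n),
        fseq H G (j + 1) ≫ fseq G H (j + 1) = 𝟙 (H.F (j + 1)) ∧
        fseq G H (j + 1) ≫ fseq H G (j + 1) = 𝟙 (G.F (j + 1)) := by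
      intro hjH hjG
      obtain ⟨c1, c2⟩ := ih3 (by omega) (by omega)
      obtain ⟨_, hph, sqHG⟩ := core H G j hjH (by omega) c1 c2
      obtain ⟨_, _, sqGH⟩ := core G H j hjG (by omega) c2 c1
      constructor
      · refine factor_unique H H j hjH (by omega) (fun i hi hi' => ?_) ?_
        · have := phase_lt_of_lt H (show j < i by omega) hi'
          linarith
        · rw [Category.id_comp, Category.assoc, ← sqGH, ← Category.assoc, ← sqHG,
            Category.assoc, c1, Category.comp_id]
      · refine factor_unique G G j hjG (by omega) (fun i hi hi' => ?_) ?_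
        · have := phase_lt_of_lt G (show j < i by omega) hi'
          linarith
        · rw [Category.id_comp, Category.assoc, ← sqHG, ← Category.assoc, ← sqGH,
            Category.assoc, c2, Category.comp_id]
    refine ⟨fun h => ?_, fun h => ?_, fun h1 h2 => key (by omega) (by omega)⟩
    · have hjH : j ≤ H.n := by omega
      obtain ⟨c1, c2⟩ := ih3 (by omega) (ih1 (by omega))
      have := (core H G j hjH (by omega) c1 c2).1
      omega
    · have hjG : j ≤ G.n := by omega
      obtain ⟨c1, c2⟩ := ih3 (ih2 (by omega)) (by omega)
      have := (core G H j hjG (by omega) c2 c1).1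
      omega

end Aux

/-!
STATEMENT 8 (uniqueness of Harder–Narasimhan filtrations):
If `H` and `G` are two Harder–Narasimhan filtrations of the same nonzero object `X`, then
they have the same length and phases, and there are unique isomorphisms
`f j : H.F j ≅ G.F j` and `g j : H.A j ≅ G.A j` with `f 0 = id_X` forming isomorphisms of
the defining distinguished triangles.
-/

theorem statement8
    {D : Type u} [Category.{v} D] [HasZeroObject D] [HasShift D ℤ] [Preadditive D]
    [∀ n : ℤ, (shiftFunctor D n).Additive] [Pretriangulated D]
    (S : Slicing D) {X : D} (hX : ¬ IsZero X) (H G : HNFiltration S X) :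
    H.n = G.n ∧ (∀ j ≤ H.n, H.phase j = G.phase j) ∧
    ∃ (f : ∀ j : ℕ, H.F j ⟶ G.F j) (g : ∀ j : ℕ, H.A j ⟶ G.A j),
      f 0 = eqToHom (H.F_zero.trans G.F_zero.symm) ∧
      (∀ j ≤ H.n, IsIso (f j) ∧ IsIso (f (j + 1)) ∧ IsIso (g j)) ∧
      (∀ j ≤ H.n,
        H.f j ≫ f j = f (j + 1) ≫ G.f j ∧
        H.g j ≫ g j = f j ≫ G.g j ∧
        H.h j ≫ (f (j + 1))⟦(1 : ℤ)⟧' = g j ≫ G.h j) ∧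
      (∀ (f' : ∀ j : ℕ, H.F j ⟶ G.F j) (g' : ∀ j : ℕ, H.A j ⟶ G.A j),
        f' 0 = eqToHom (H.F_zero.trans G.F_zero.symm) →
        (∀ j ≤ H.n,
          H.f j ≫ f' j = f' (j + 1) ≫ G.f j ∧
          H.g j ≫ g' j = f' j ≫ G.g j ∧
          H.h j ≫ (f' (j + 1))⟦(1 : ℤ)⟧' = g' j ≫ G.h j) →
        (∀ j ≤ H.n + 1, f' j = f j) ∧ (∀ j ≤ H.n, g' j = g j)) := by
  have inv := main_inv H G
  have hnm : H.n = G.n := by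
    have h1 := (inv (H.n + 1)).1 le_rfl
    have h2 := (inv (G.n + 1)).2.1 le_rfl
    omega
  have hcomps : ∀ j, j ≤ H.n + 1 →
      fseq H G j ≫ fseq G H j = 𝟙 (H.F j) ∧ fseq G H j ≫ fseq H G j = 𝟙 (G.F j) :=
    fun j hj => (inv j).2.2 hj (by omega)
  have hcore : ∀ j, j ≤ H.n → j ≤ G.n ∧ H.phase j = G.phase j ∧
      H.f j ≫ fseq H G j = fseq H G (j + 1) ≫ G.f j :=
    fun j hj => core H G j hj (by omega) (hcomps j (by omega)).1 (hcomps j (by omega)).2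
  have hphase : ∀ j ≤ H.n, H.phase j = G.phase j := fun j hj => (hcore j hj).2.1
  have hgspec : ∀ j (hj : j ≤ H.n),
      H.g j ≫ gseq H G j = fseq H G j ≫ G.g j ∧
      H.h j ≫ (fseq H G (j + 1))⟦(1 : ℤ)⟧' = gseq H G j ≫ G.h j :=
    fun j hj => gseq_spec H G j hj (hcore j hj).1 (hcore j hj).2.2
  refine ⟨hnm, hphase, fseq H G, gseq H G, by rw [fseq], ?_, ?_, ?_⟩
  · intro j hj
    have i1 : IsIso (fseq H G j) :=
      ⟨fseq G H j, (hcomps j (by omega)).1, (hcomps j (by omega)).2⟩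
    have i2 : IsIso (fseq H G (j + 1)) :=
      ⟨fseq G H (j + 1), (hcomps (j + 1) (by omega)).1, (hcomps (j + 1) (by omega)).2⟩
    refine ⟨i1, i2, ?_⟩
    refine isIso₃_of_isIso₁₂ (Triangle.homMk (Triangle.mk (H.f j) (H.g j) (H.h j))
      (Triangle.mk (G.f j) (G.g j) (G.h j)) (fseq H G (j + 1)) (fseq H G j) (gseq H G j)
      (hcore j hj).2.2 (hgspec j hj).1 (hgspec j hj).2)
      (H.dist j hj) (G.dist j (hcore j hj).1) ?_ ?_
    · exact i2
    · exact i1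
  · intro j hj
    exact ⟨(hcore j hj).2.2, (hgspec j hj).1, (hgspec j hj).2⟩
  · intro f' g' hf'0 hsq'
    have hf' : ∀ j, j ≤ H.n + 1 → f' j = fseq H G j := by
      intro j
      induction j with
      | zero => intro _; rw [hf'0, fseq]
      | succ j ih =>
        intro hj
        have hjH : j ≤ H.n := by omega
        have hih := ih (by omega)
        refine factor_unique H G j (hcore j hjH).1 (by omega) (fun i hi hi' => ?_) ?_
        · have h1 := phase_lt_of_lt H (show j < i by omega) hi'
          have h2 := hphase j hjH
          linarith
        · rw [← (hsq' j hjH).1, hih, (hcore j hjH).2.2]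
    refine ⟨hf', ?_⟩
    intro j hj
    refine g_unique H G j hj (hcore j hj).1 (fun i hi hi' => ?_) ?_
    · have h1 := phase_lt_of_lt H (show j < i by omega) hi'
      have h2 := hphase j hj
      linarith
    · rw [(hsq' j hj).2.1, hf' j (by omega), (hgspec j hj).1]
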